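/- Fix a, b > 0 with a > b, 0 < x₀ < x₁ < 1, γ > 0, and a convex function Φ : ℝ → ℝ of class C² with Φ'(0) = 0 and lim_{v→∞} Φ'(v) = ∞. Let 0 < T < ∞ and let D₁, D₂ : [0,T] → ℝ be continuous, differentiable on [0,T), strictly positive on [0,T), with D₁(0), D₂(0) ≥ γ, satisfying D₁'(t) = a² Φ''(u₀(t))/D₁(t)² and D₂'(t) = (a−b)(a Φ''(u₀(t)) − b Φ''(u₁(t)))/D₂(t)², where u₀(t) = a(x₁−x₀)/D₁(t) + (a−b)(1−x₁)/D₂(t) and u₁(t) = (a−b)(1−x₁)/D₂(t). Assume the energy E(t) = a Φ'(u₀(t)) − b Φ'(u₁(t)) satisfies E(t) ≤ E(0) < ∞ for all t ∈ [0,T). Then D₂(T) > 0. -/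
import Mathlib


open MeasureTheory Set Filter
open Topology

/-- For the δ-source gradient-flow ODE system with `a > b`, if
`Φ'(v) → ∞` as `v → ∞` and the energy `E(t) = aΦ'(u₀(t)) − bΦ'(u₁(t))` is
nonincreasing, then `D₂(T) > 0`. -/
theorem stmt_11
    (a b : ℝ) (ha : 0 < a) (hb : 0 < b) (hab : b < a)
    (x₀ x₁ : ℝ) (hx₀ : 0 < x₀) (hx01 : x₀ < x₁) (hx₁ : x₁ < 1)
    (γ : ℝ) (hγ : 0 < γ)
    (Φ : ℝ → ℝ) (hΦ : ContDiff ℝ 2 Φ) (hconv : ConvexOn ℝ univ Φ)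
    (hΦ'0 : deriv Φ 0 = 0)
    (hΦ'top : Tendsto (deriv Φ) atTop atTop)
    (T : ℝ) (hT : 0 < T)
    (D₁ D₂ : ℝ → ℝ)
    (hD₁c : ContinuousOn D₁ (Icc 0 T)) (hD₂c : ContinuousOn D₂ (Icc 0 T))
    (hD₁pos : ∀ t ∈ Ico (0:ℝ) T, 0 < D₁ t) (hD₂pos : ∀ t ∈ Ico (0:ℝ) T, 0 < D₂ t)
    (hD₁0 : γ ≤ D₁ 0) (hD₂0 : γ ≤ D₂ 0)
    (u₀ u₁ : ℝ → ℝ)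
    (hu₀ : ∀ t, u₀ t = a * (x₁ - x₀) / D₁ t + (a - b) * (1 - x₁) / D₂ t)
    (hu₁ : ∀ t, u₁ t = (a - b) * (1 - x₁) / D₂ t)
    (hODE₁ : ∀ t ∈ Ico (0:ℝ) T,
      HasDerivWithinAt D₁ (a ^ 2 * iteratedDeriv 2 Φ (u₀ t) / (D₁ t) ^ 2) (Icc 0 T) t)
    (hODE₂ : ∀ t ∈ Ico (0:ℝ) T,
      HasDerivWithinAt D₂
        ((a - b) * (a * iteratedDeriv 2 Φ (u₀ t) - b * iteratedDeriv 2 Φ (u₁ t)) / (D₂ t) ^ 2)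
        (Icc 0 T) t)
    (E : ℝ → ℝ) (hE : ∀ t, E t = a * deriv Φ (u₀ t) - b * deriv Φ (u₁ t))
    (hEdec : ∀ t ∈ Ico (0:ℝ) T, E t ≤ E 0) :
    0 < D₂ T := by

  by_contra hcon
  push_neg at hcon
  -- the filter of approach to T from the left within [0,T)
  have hne : (𝓝[Ico (0:ℝ) T] T).NeBot := by
    rw [← mem_closure_iff_nhdsWithin_neBot, closure_Ico hT.ne]
    exact ⟨hT.le, le_rfl⟩
  have hIcoIcc : Ico (0:ℝ) T ⊆ Icc 0 T := Ico_subset_Icc_self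
  have hTmem : T ∈ Icc (0:ℝ) T := ⟨hT.le, le_rfl⟩
  -- D₂ tends to D₂ T from the left
  have hD₂lim : Tendsto D₂ (𝓝[Ico (0:ℝ) T] T) (𝓝 (D₂ T)) :=
    ((hD₂c T hTmem).mono hIcoIcc).tendsto
  -- D₂ T ≥ 0
  have hD₂T0 : D₂ T = 0 := by
    refine le_antisymm hcon ?_
    exact ge_of_tendsto hD₂lim (eventually_mem_nhdsWithin.mono fun t ht => (hD₂pos t ht).le)
  rw [hD₂T0] at hD₂lim
  -- D₂ tends to 0 within (0,∞)
  have hD₂pos' : ∀ᶠ t in 𝓝[Ico (0:ℝ) T] T, D₂ t ∈ Ioi (0:ℝ) :=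
    eventually_mem_nhdsWithin.mono (fun t ht => hD₂pos t ht)
  have hD₂lim' : Tendsto D₂ (𝓝[Ico (0:ℝ) T] T) (𝓝[>] 0) :=
    tendsto_nhdsWithin_iff.2 ⟨hD₂lim, hD₂pos'⟩
  have hc : (0:ℝ) < (a - b) * (1 - x₁) :=
    mul_pos (sub_pos.2 hab) (sub_pos.2 hx₁)
  -- u₁ → ∞
  have hu₁top : Tendsto u₁ (𝓝[Ico (0:ℝ) T] T) atTop := by
    have h1 : Tendsto (fun t => (D₂ t)⁻¹) (𝓝[Ico (0:ℝ) T] T) atTop :=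
      hD₂lim'.inv_tendsto_nhdsGT_zero
    have h2 : Tendsto (fun t => (a - b) * (1 - x₁) * (D₂ t)⁻¹)
        (𝓝[Ico (0:ℝ) T] T) atTop := h1.const_mul_atTop hc
    refine h2.congr (fun t => ?_)
    rw [hu₁ t, div_eq_mul_inv]
  -- Φ' is differentiable everywhere
  have hdiff : ∀ x : ℝ, DifferentiableAt ℝ Φ x := fun x =>
    (hΦ.differentiable (by norm_num)).differentiableAt
  have hmono : MonotoneOn (deriv Φ) univ :=
    hconv.monotoneOn_deriv (fun x _ => hdiff x)
  -- Φ'(u₁ t) → ∞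
  have hΦ'u₁ : Tendsto (fun t => deriv Φ (u₁ t)) (𝓝[Ico (0:ℝ) T] T) atTop :=
    hΦ'top.comp hu₁top
  have hEbig : Tendsto (fun t => (a - b) * deriv Φ (u₁ t)) (𝓝[Ico (0:ℝ) T] T) atTop :=
    hΦ'u₁.const_mul_atTop (sub_pos.2 hab)
  -- but (a-b) Φ'(u₁ t) ≤ E t ≤ E 0 eventually
  have hbound : ∀ᶠ t in 𝓝[Ico (0:ℝ) T] T, (a - b) * deriv Φ (u₁ t) ≤ E 0 := by
    refine eventually_mem_nhdsWithin.mono (fun t ht => ?_)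
    have hle : u₁ t ≤ u₀ t := by
      rw [hu₀ t, hu₁ t]
      have : 0 ≤ a * (x₁ - x₀) / D₁ t :=
        div_nonneg (mul_nonneg ha.le (sub_pos.2 hx01).le) (hD₁pos t ht).le
      linarith
    have hmle : deriv Φ (u₁ t) ≤ deriv Φ (u₀ t) :=
      hmono (mem_univ _) (mem_univ _) hle
    have hEt : (a - b) * deriv Φ (u₁ t) ≤ E t := by
      rw [hE t]; nlinarith
    exact hEt.trans (hEdec t ht)
  obtain ⟨t, ht1, ht2⟩ := ((hEbig.eventually_ge_atTop (E 0 + 1)).and hbound).exists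
  linarith
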